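/- (Khinchin lower bound step) Let $(s_l)_{l \ge 1}$ be the Rademacher functions on $[0,1]$ and let $(c_l)_{l \ge 1}$ be real numbers with only finitely many nonzero. Then $\int_0^1 \big|\sum_l c_l s_l(t)\big|^{2/3} dt \ge \kappa \big(\sum_l c_l^2\big)^{1/3}$ for an absolute constant $\kappa > 0$. Consequently, there exists $t_0 \in [0,1]$ with $\big|\sum_l c_l s_l(t_0)\big|^{2/3} \ge \kappa (\sum_l c_l^2)^{1/3}$. -/

import Mathlib

open MeasureTheory intervalIntegral

private def eps (j k : ℕ) : ℝ := if Nat.testBit k j then -1 else 1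

private lemma eps_sq (j k : ℕ) : eps j k ^ 2 = 1 := by
  unfold eps; split <;> norm_num

private lemma eps_low {k : ℕ} (n : ℕ) (hk : k < 2 ^ n) : eps n k = 1 := by
  unfold eps; rw [Nat.testBit_lt_two_pow hk]; rfl

private lemma eps_shift {j n : ℕ} (k : ℕ) (hj : j < n) : eps j (2 ^ n + k) = eps j k := by
  unfold eps; rw [Nat.testBit_two_pow_add_gt hj]

private lemma eps_high {k : ℕ} (n : ℕ) (hk : k < 2 ^ n) : eps n (2 ^ n + k) = -1 := by
  unfold eps; rw [Nat.testBit_two_pow_add_eq, Nat.testBit_lt_two_pow hk]; rfl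

/-- Discrete second and fourth moments of a Rademacher sum over the boolean cube. -/
private lemma moments (b : ℕ → ℝ) : ∀ n : ℕ,
    (∑ k ∈ Finset.range (2 ^ n), (∑ j ∈ Finset.range n, b j * eps j k) ^ 2)
      = 2 ^ n * ∑ j ∈ Finset.range n, b j ^ 2
  ∧ (∑ k ∈ Finset.range (2 ^ n), (∑ j ∈ Finset.range n, b j * eps j k) ^ 4)
      ≤ 3 * 2 ^ n * (∑ j ∈ Finset.range n, b j ^ 2) ^ 2 := by
  intro n
  induction n with
  | zero => simp
  | succ n ih =>
    obtain ⟨ih2, ih4⟩ := ih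
    set T : ℕ → ℝ := fun k => ∑ j ∈ Finset.range n, b j * eps j k with hT
    set M : ℝ := ∑ j ∈ Finset.range n, b j ^ 2 with hM
    set a : ℝ := b n with ha
    have hMnn : 0 ≤ M := Finset.sum_nonneg fun _ _ => sq_nonneg _
    have hsum1 : ∀ k ∈ Finset.range (2 ^ n),
        ∑ j ∈ Finset.range (n + 1), b j * eps j k = T k + a := by
      intro k hk
      rw [Finset.sum_range_succ, eps_low n (Finset.mem_range.mp hk), mul_one]
    have hsum2 : ∀ k ∈ Finset.range (2 ^ n),
        ∑ j ∈ Finset.range (n + 1), b j * eps j (2 ^ n + k) = T k - a := by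
      intro k hk
      rw [Finset.sum_range_succ, eps_high n (Finset.mem_range.mp hk)]
      have h1 : ∀ j ∈ Finset.range n, b j * eps j (2 ^ n + k) = b j * eps j k := by
        intro j hj
        rw [eps_shift k (Finset.mem_range.mp hj)]
      rw [Finset.sum_congr rfl h1]; ring
    have hsplit : ∀ g : ℕ → ℝ, ∑ k ∈ Finset.range (2 ^ (n + 1)), g k
        = ∑ k ∈ Finset.range (2 ^ n), g k + ∑ k ∈ Finset.range (2 ^ n), g (2 ^ n + k) := by
      intro g
      have : (2:ℕ) ^ (n+1) = 2 ^ n + 2 ^ n := by ring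
      rw [this, Finset.sum_range_add]
    have hbsq : ∑ j ∈ Finset.range (n + 1), b j ^ 2 = M + a ^ 2 := by
      rw [Finset.sum_range_succ]
    have hTsum2 : ∑ k ∈ Finset.range (2 ^ n), (T k) ^ 2 = 2 ^ n * M := ih2
    have hTsum4 : ∑ k ∈ Finset.range (2 ^ n), (T k) ^ 4 ≤ 3 * 2 ^ n * M ^ 2 := ih4
    have hcard : ((Finset.range (2 ^ n)).card : ℝ) = 2 ^ n := by
      rw [Finset.card_range]; push_cast; ring
    have eA2 : ∑ k ∈ Finset.range (2 ^ n), (∑ j ∈ Finset.range (n + 1), b j * eps j k) ^ 2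
        = ∑ k ∈ Finset.range (2 ^ n), (T k + a) ^ 2 :=
      Finset.sum_congr rfl fun k hk => by rw [hsum1 k hk]
    have eB2 : ∑ k ∈ Finset.range (2 ^ n), (∑ j ∈ Finset.range (n + 1), b j * eps j (2 ^ n + k)) ^ 2
        = ∑ k ∈ Finset.range (2 ^ n), (T k - a) ^ 2 :=
      Finset.sum_congr rfl fun k hk => by rw [hsum2 k hk]
    have eA4 : ∑ k ∈ Finset.range (2 ^ n), (∑ j ∈ Finset.range (n + 1), b j * eps j k) ^ 4
        = ∑ k ∈ Finset.range (2 ^ n), (T k + a) ^ 4 :=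
      Finset.sum_congr rfl fun k hk => by rw [hsum1 k hk]
    have eB4 : ∑ k ∈ Finset.range (2 ^ n), (∑ j ∈ Finset.range (n + 1), b j * eps j (2 ^ n + k)) ^ 4
        = ∑ k ∈ Finset.range (2 ^ n), (T k - a) ^ 4 :=
      Finset.sum_congr rfl fun k hk => by rw [hsum2 k hk]
    constructor
    · rw [hsplit, eA2, eB2, hbsq]
      have : ∑ k ∈ Finset.range (2 ^ n), (T k + a) ^ 2
          + ∑ k ∈ Finset.range (2 ^ n), (T k - a) ^ 2
          = ∑ k ∈ Finset.range (2 ^ n), (2 * (T k) ^ 2 + 2 * a ^ 2) := by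
        rw [← Finset.sum_add_distrib]
        exact Finset.sum_congr rfl fun k _ => by ring
      rw [this, Finset.sum_add_distrib, ← Finset.mul_sum, hTsum2,
        Finset.sum_const, nsmul_eq_mul, hcard]
      ring
    · rw [hsplit, eA4, eB4, hbsq]
      have e1 : ∑ k ∈ Finset.range (2 ^ n), (T k + a) ^ 4
          + ∑ k ∈ Finset.range (2 ^ n), (T k - a) ^ 4
          = ∑ k ∈ Finset.range (2 ^ n), (2 * (T k) ^ 4 + 12 * a ^ 2 * (T k) ^ 2 + 2 * a ^ 4) := by
        rw [← Finset.sum_add_distrib]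
        exact Finset.sum_congr rfl fun k _ => by ring
      rw [e1]
      have e2 : ∑ k ∈ Finset.range (2 ^ n), (2 * (T k) ^ 4 + 12 * a ^ 2 * (T k) ^ 2 + 2 * a ^ 4)
          = 2 * (∑ k ∈ Finset.range (2 ^ n), (T k) ^ 4)
            + 12 * a ^ 2 * (∑ k ∈ Finset.range (2 ^ n), (T k) ^ 2)
            + 2 ^ n * (2 * a ^ 4) := by
        rw [Finset.sum_add_distrib, Finset.sum_add_distrib, ← Finset.mul_sum, ← Finset.mul_sum,
          Finset.sum_const, nsmul_eq_mul, hcard]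
      rw [e2, hTsum2]
      have h2n : (0:ℝ) < 2 ^ n := by positivity
      have hpow : (2:ℝ) ^ (n + 1) = 2 * 2 ^ n := by ring
      rw [hpow]
      nlinarith [hTsum4, mul_nonneg h2n.le (by positivity : (0:ℝ) ≤ a ^ 4)]

/-- On the open dyadic interval `(k/2^n, (k+1)/2^n)` the Rademacher function `s_l`
takes the constant value `eps (n-1-l) k`. -/
private lemma sign_eq {n l k : ℕ} (hl : l < n) {t : ℝ}
    (ht1 : (k : ℝ) / 2 ^ n < t) (ht2 : t < ((k : ℝ) + 1) / 2 ^ n) :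
    Real.sign (Real.sin (2 ^ (l + 1) * Real.pi * t)) = eps (n - 1 - l) k := by
  set d := n - 1 - l with hd
  set q := k / 2 ^ d with hq
  have hnd : n = (l + 1) + d := by omega
  have h2d : (0:ℝ) < 2 ^ d := by positivity
  have h2l : (0:ℝ) < 2 ^ (l + 1) := by positivity
  have h2n : (2:ℝ) ^ n = 2 ^ (l + 1) * 2 ^ d := by rw [hnd, pow_add]
  have hk1 : (k : ℝ) < t * 2 ^ n := (div_lt_iff₀ (by positivity)).mp ht1
  have hk2 : t * 2 ^ n < (k : ℝ) + 1 := (lt_div_iff₀ (by positivity)).mp ht2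
  rw [h2n] at hk1 hk2
  have hqk : (q : ℝ) * 2 ^ d ≤ (k : ℝ) := by
    have := Nat.div_mul_le_self k (2 ^ d)
    exact_mod_cast this
  have hkq : (k : ℝ) + 1 ≤ ((q : ℝ) + 1) * 2 ^ d := by
    rw [hq]
    have h := Nat.div_add_mod k (2 ^ d)
    have h2 : k % 2 ^ d < 2 ^ d := Nat.mod_lt _ (by positivity)
    have hnat : k + 1 ≤ (k / 2 ^ d + 1) * 2 ^ d := by nlinarith [h, h2]
    exact_mod_cast hnat
  have hx1 : (q : ℝ) < 2 ^ (l + 1) * t := by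
    have : (q : ℝ) * 2 ^ d < (2 ^ (l + 1) * t) * 2 ^ d := by nlinarith
    exact lt_of_mul_lt_mul_right this h2d.le
  have hx2 : 2 ^ (l + 1) * t < (q : ℝ) + 1 := by
    have : (2 ^ (l + 1) * t) * 2 ^ d < ((q : ℝ) + 1) * 2 ^ d := by nlinarith
    exact lt_of_mul_lt_mul_right this h2d.le
  set y : ℝ := 2 ^ (l + 1) * t - q with hy
  have hy0 : 0 < y := by simp only [hy]; linarith
  have hy1 : y < 1 := by simp only [hy]; linarith
  have harg : 2 ^ (l + 1) * Real.pi * t = Real.pi * y + ((q : ℤ) : ℝ) * Real.pi := by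
    simp only [hy]; push_cast; ring
  rw [harg, Real.sin_add_int_mul_pi]
  have hsin : 0 < Real.sin (Real.pi * y) := by
    apply Real.sin_pos_of_pos_of_lt_pi (by positivity)
    nlinarith [Real.pi_pos]
  rw [zpow_natCast]
  rcases Nat.even_or_odd q with hpar | hpar
  · rw [hpar.neg_one_pow, one_mul, Real.sign_of_pos hsin]
    have hq2 : k / 2 ^ d % 2 = 0 := by rw [← hq]; exact Nat.even_iff.mp hpar
    simp [eps, Nat.testBit_eq_decide_div_mod_eq, ← hd, hq2]
  · rw [hpar.neg_one_pow, neg_one_mul, Real.sign_of_neg (neg_neg_iff_pos.mpr hsin |>.le.lt_of_ne ?hne)]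
    case hne => exact (neg_neg_iff_pos.mpr hsin).ne
    have hq2 : k / 2 ^ d % 2 = 1 := by rw [← hq]; exact Nat.odd_iff.mp hpar
    simp [eps, Nat.testBit_eq_decide_div_mod_eq, ← hd, hq2]

/-- Pointwise inequality used in place of Hölder's inequality. -/
private lemma ptwise {x M : ℝ} (hx : 0 ≤ x) (hM : 0 < M) :
    x ^ 2 ≤ 6 * M ^ ((2:ℝ)/3) * x ^ ((2:ℝ)/3) + x ^ 4 / (6 * M) := by
  rcases le_or_gt (x ^ 2) (6 * M) with h | h
  · have h2 : 0 ≤ x ^ 4 / (6 * M) := by positivity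
    have key : x ^ 2 ≤ 6 * M ^ ((2:ℝ)/3) * x ^ ((2:ℝ)/3) := by
      rcases eq_or_lt_of_le hx with h0 | h0
      · rw [← h0]
        rw [Real.zero_rpow (by norm_num : (2:ℝ)/3 ≠ 0)]
        norm_num
      · have e1 : x ^ (2:ℕ) = x ^ ((2:ℝ)/3) * (x ^ (2:ℕ)) ^ ((2:ℝ)/3) := by
          rw [← Real.rpow_natCast x 2, ← Real.rpow_mul hx, ← Real.rpow_add h0]
          norm_num
        rw [e1]
        have h3 : (x ^ (2:ℕ)) ^ ((2:ℝ)/3) ≤ (6 * M) ^ ((2:ℝ)/3) :=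
          Real.rpow_le_rpow (by positivity) h (by norm_num)
        have h4 : (6 * M) ^ ((2:ℝ)/3) ≤ 6 * M ^ ((2:ℝ)/3) := by
          rw [Real.mul_rpow (by norm_num) hM.le]
          have h6 : (6:ℝ) ^ ((2:ℝ)/3) ≤ 6 := by
            calc (6:ℝ) ^ ((2:ℝ)/3) ≤ 6 ^ (1:ℝ) :=
                  Real.rpow_le_rpow_of_exponent_le (by norm_num) (by norm_num)
            _ = 6 := Real.rpow_one 6
          exact mul_le_mul_of_nonneg_right h6 (Real.rpow_nonneg hM.le _)
        have h5 : x ^ ((2:ℝ)/3) * (x ^ (2:ℕ)) ^ ((2:ℝ)/3)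
            ≤ x ^ ((2:ℝ)/3) * (6 * M ^ ((2:ℝ)/3)) :=
          mul_le_mul_of_nonneg_left (h3.trans h4) (Real.rpow_nonneg hx _)
        calc x ^ ((2:ℝ)/3) * (x ^ (2:ℕ)) ^ ((2:ℝ)/3)
            ≤ x ^ ((2:ℝ)/3) * (6 * M ^ ((2:ℝ)/3)) := h5
          _ = 6 * M ^ ((2:ℝ)/3) * x ^ ((2:ℝ)/3) := by ring
    linarith
  · have h5 : x ^ 2 ≤ x ^ 4 / (6 * M) := by
      rw [le_div_iff₀ (by positivity)]
      nlinarith [sq_nonneg x]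
    have h6 : 0 ≤ 6 * M ^ ((2:ℝ)/3) * x ^ ((2:ℝ)/3) := by positivity
    linarith

/-- Khinchin lower bound for exponent `2/3`: with `s_l(t) = sign(sin(2^l π t))` the
Rademacher functions, `∫₀¹ |∑ c_l s_l(t)|^{2/3} dt ≥ κ (∑ c_l²)^{1/3}` for an absolute
`κ > 0`; consequently some `t₀ ∈ [0,1]` achieves this bound pointwise. -/
theorem stmt14 :
    ∃ κ > (0 : ℝ), ∀ c : ℕ → ℝ, (Function.support c).Finite →
      let s : ℕ → ℝ → ℝ := fun l t => Real.sign (Real.sin (2 ^ (l + 1) * Real.pi * t))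
      κ * (∑' l, c l ^ 2) ^ ((1 : ℝ) / 3) ≤
          (∫ t in (0 : ℝ)..1, |∑' l, c l * s l t| ^ ((2 : ℝ) / 3)) ∧
        ∃ t₀ ∈ Set.Icc (0 : ℝ) 1,
          κ * (∑' l, c l ^ 2) ^ ((1 : ℝ) / 3) ≤ |∑' l, c l * s l t₀| ^ ((2 : ℝ) / 3) := by
  refine ⟨1/12, by norm_num, ?_⟩
  intro c hfin
  intro s
  have hs : s = fun l t => Real.sign (Real.sin (2 ^ (l + 1) * Real.pi * t)) := rfl
  obtain ⟨n, hn⟩ : ∃ n : ℕ, ∀ l, c l ≠ 0 → l < n := by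
    obtain ⟨m, hm⟩ := hfin.bddAbove
    exact ⟨m + 1, fun l hl => Nat.lt_succ_of_le (hm (Function.mem_support.mpr hl))⟩
  set b : ℕ → ℝ := fun j => c (n - 1 - j) with hb
  set V : ℕ → ℝ := fun k => ∑ j ∈ Finset.range n, b j * eps j k with hV
  set M : ℝ := ∑ j ∈ Finset.range n, b j ^ 2 with hM
  have hMnn : 0 ≤ M := Finset.sum_nonneg fun _ _ => sq_nonneg _
  have h2n : (0:ℝ) < 2 ^ n := by positivity
  have hzero : ∀ l ∉ Finset.range n, c l ^ 2 = 0 := by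
    intro l hl
    have : c l = 0 := by by_contra h; exact hl (Finset.mem_range.mpr (hn l h))
    simp [this]
  have hcM : (∑' l, c l ^ 2) = M := by
    rw [tsum_eq_sum hzero, hM]
    refine Finset.sum_nbij' (fun l => n - 1 - l) (fun j => n - 1 - j) ?_ ?_ ?_ ?_ ?_
    · intro a ha; simp only [Finset.mem_range] at *; omega
    · intro a ha; simp only [Finset.mem_range] at *; omega
    · intro a ha; simp only [Finset.mem_range] at ha; omega
    · intro a ha; simp only [Finset.mem_range] at ha; omega
    · intro a ha; rw [Finset.mem_range] at ha; simp only [hb]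
      have e : n - 1 - (n - 1 - a) = a := by omega
      rw [e]
  have hSt : ∀ t : ℝ, (∑' l, c l * s l t) = ∑ l ∈ Finset.range n, c l * s l t := by
    intro t
    refine tsum_eq_sum ?_
    intro l hl
    have : c l = 0 := by by_contra h; exact hl (Finset.mem_range.mpr (hn l h))
    simp [this]
  have hkey : ∀ k : ℕ, k < 2 ^ n → ∀ t : ℝ, (k : ℝ) / 2 ^ n < t → t < ((k:ℝ)+1) / 2 ^ n →
      (∑ l ∈ Finset.range n, c l * s l t) = V k := by
    intro k hk t ht1 ht2
    have e1 : ∀ l ∈ Finset.range n, c l * s l t = c l * eps (n - 1 - l) k := by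
      intro l hl
      simp only [hs]
      rw [sign_eq (Finset.mem_range.mp hl) ht1 ht2]
    rw [Finset.sum_congr rfl e1, hV]
    refine Finset.sum_nbij' (fun l => n - 1 - l) (fun j => n - 1 - j) ?_ ?_ ?_ ?_ ?_
    · intro a ha; simp only [Finset.mem_range] at *; omega
    · intro a ha; simp only [Finset.mem_range] at *; omega
    · intro a ha; simp only [Finset.mem_range] at ha; omega
    · intro a ha; simp only [Finset.mem_range] at ha; omega
    · intro a ha; rw [Finset.mem_range] at ha; simp only [hb]
      have e : n - 1 - (n - 1 - a) = a := by omega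
      rw [e]
  have hdiv : ∀ x y : ℝ, x < y → x / 2 ^ n < y / 2 ^ n := fun x y h =>
    div_lt_div_of_pos_right h h2n
  set grid : ℕ → ℝ := fun k => (k : ℝ) / 2 ^ n with hgrid
  set F : ℝ → ℝ := fun t => |∑' l, c l * s l t| ^ ((2:ℝ)/3) with hF
  have hgridlt : ∀ k : ℕ, grid k < grid (k+1) := by
    intro k
    simp only [hgrid]
    apply hdiv
    push_cast
    linarith
  have hgridcast : ∀ k : ℕ, grid (k+1) = ((k:ℝ)+1) / 2 ^ n := by
    intro k; simp only [hgrid]; push_cast; ring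
  have hconst : ∀ k, k < 2 ^ n → ∀ t ∈ Set.Ioc (grid k) (grid (k+1)), t ≠ grid (k+1) →
      F t = |V k| ^ ((2:ℝ)/3) := by
    intro k hk t ht htne
    have ht2 : t < grid (k+1) := lt_of_le_of_ne ht.2 htne
    rw [hgridcast k] at ht2
    simp only [hF]
    rw [hSt t, hkey k hk t ht.1 ht2]
  have hae : ∀ k, k < 2 ^ n →
      ∀ᵐ t : ℝ, t ∈ Set.Ioc (grid k) (grid (k+1)) → F t = |V k| ^ ((2:ℝ)/3) := by
    intro k hk
    rw [MeasureTheory.ae_iff]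
    refine measure_mono_null ?_ (Real.volume_singleton (a := grid (k+1)))
    intro t ht
    simp only [Set.mem_setOf_eq, Classical.not_imp] at ht
    simp only [Set.mem_singleton_iff]
    by_contra hne
    exact ht.2 (hconst k hk t ht.1 hne)
  have hii : ∀ k, k < 2 ^ n → IntervalIntegrable F volume (grid k) (grid (k+1)) := by
    intro k hk
    rw [intervalIntegrable_iff, Set.uIoc_of_le (hgridlt k).le]
    have h0 : F =ᵐ[volume.restrict (Set.Ioc (grid k) (grid (k+1)))]
        (fun _ => |V k| ^ ((2:ℝ)/3)) :=
      (MeasureTheory.ae_restrict_iff' measurableSet_Ioc).mpr (hae k hk)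
    have h1 : (fun _ : ℝ => |V k| ^ ((2:ℝ)/3)) =ᵐ[volume.restrict (Set.Ioc (grid k) (grid (k+1)))] F :=
      h0.symm
    exact MeasureTheory.Integrable.congr
      ((MeasureTheory.integrableOn_const_iff).mpr (Or.inr measure_Ioc_lt_top)) h1
  have hpiece : ∀ k, k < 2 ^ n →
      (∫ t in grid k..grid (k+1), F t) = (1 / 2 ^ n) * |V k| ^ ((2:ℝ)/3) := by
    intro k hk
    have hcg : ∀ᵐ t : ℝ, t ∈ Set.uIoc (grid k) (grid (k+1)) → F t = |V k| ^ ((2:ℝ)/3) := by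
      rw [Set.uIoc_of_le (hgridlt k).le]
      exact hae k hk
    rw [intervalIntegral.integral_congr_ae hcg, intervalIntegral.integral_const, smul_eq_mul]
    have : grid (k+1) - grid k = 1 / 2 ^ n := by
      rw [hgridcast k]; simp only [hgrid]; field_simp; ring
    rw [this]
  have hgrid0 : grid 0 = 0 := by simp [hgrid]
  have hgridN : grid (2 ^ n) = 1 := by
    simp only [hgrid]
    rw [div_eq_one_iff_eq (ne_of_gt h2n)]
    push_cast
    ring
  have hint : (∫ t in (0:ℝ)..1, F t) = ∑ k ∈ Finset.range (2 ^ n), (1 / 2 ^ n) * |V k| ^ ((2:ℝ)/3) := by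
    have hadj := intervalIntegral.sum_integral_adjacent_intervals (fun k hk => hii k hk)
    rw [hgrid0, hgridN] at hadj
    rw [← hadj]
    exact Finset.sum_congr rfl fun k hk => hpiece k (Finset.mem_range.mp hk)
  obtain ⟨m2, m4⟩ := moments b n
  have hV2 : ∑ k ∈ Finset.range (2 ^ n), V k ^ 2 = 2 ^ n * M := m2
  have hV4 : ∑ k ∈ Finset.range (2 ^ n), V k ^ 4 ≤ 3 * 2 ^ n * M ^ 2 := m4
  rcases eq_or_lt_of_le hMnn with hM0 | hM0
  · -- degenerate case `M = 0`
    have hLHS : (1/12 : ℝ) * (∑' l, c l ^ 2) ^ ((1:ℝ)/3) = 0 := by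
      rw [hcM, ← hM0, Real.zero_rpow (by norm_num : (1:ℝ)/3 ≠ 0), mul_zero]
    constructor
    · refine hLHS.le.trans ?_
      rw [hint]
      exact Finset.sum_nonneg fun k _ => by positivity
    · refine ⟨0, by norm_num, ?_⟩
      exact hLHS.le.trans (Real.rpow_nonneg (abs_nonneg _) _)
  · -- main case `M > 0`
    set A : ℝ := ∑ k ∈ Finset.range (2 ^ n), |V k| ^ ((2:ℝ)/3) with hA
    have hAnn : 0 ≤ A := Finset.sum_nonneg fun k _ => Real.rpow_nonneg (abs_nonneg _) _
    have hMp23 : 0 < M ^ ((2:ℝ)/3) := Real.rpow_pos_of_pos hM0 _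
    have hptw : ∀ k ∈ Finset.range (2 ^ n),
        V k ^ 2 ≤ 6 * M ^ ((2:ℝ)/3) * |V k| ^ ((2:ℝ)/3) + V k ^ 4 / (6 * M) := by
      intro k _
      have h := ptwise (abs_nonneg (V k)) hM0
      have h4 : |V k| ^ 4 = V k ^ 4 := by
        rw [← abs_pow, abs_of_nonneg (by positivity)]
      rwa [sq_abs, h4] at h
    have hsum : 2 ^ n * M ≤ 6 * M ^ ((2:ℝ)/3) * A + (3 * 2 ^ n * M ^ 2) / (6 * M) := by
      calc 2 ^ n * M = ∑ k ∈ Finset.range (2 ^ n), V k ^ 2 := hV2.symm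
        _ ≤ ∑ k ∈ Finset.range (2 ^ n),
              (6 * M ^ ((2:ℝ)/3) * |V k| ^ ((2:ℝ)/3) + V k ^ 4 / (6 * M)) :=
            Finset.sum_le_sum hptw
        _ = 6 * M ^ ((2:ℝ)/3) * A + (∑ k ∈ Finset.range (2 ^ n), V k ^ 4) / (6 * M) := by
            rw [Finset.sum_add_distrib, ← Finset.mul_sum, ← Finset.sum_div, hA]
        _ ≤ 6 * M ^ ((2:ℝ)/3) * A + (3 * 2 ^ n * M ^ 2) / (6 * M) := by
            gcongr
    have heq : (3 * 2 ^ n * M ^ 2) / (6 * M) = 2 ^ n * M / 2 := by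
      field_simp
      ring
    have hstep : 2 ^ n * M / 2 ≤ 6 * M ^ ((2:ℝ)/3) * A := by
      rw [heq] at hsum; linarith
    have hMsplit : M ^ ((1:ℝ)/3) * M ^ ((2:ℝ)/3) = M := by
      rw [← Real.rpow_add hM0]
      norm_num
    have h1 : (2:ℝ) ^ n * M ^ ((1:ℝ)/3) ≤ 12 * A := by
      have hA' : 2 ^ n * (M ^ ((1:ℝ)/3) * M ^ ((2:ℝ)/3)) ≤ 12 * M ^ ((2:ℝ)/3) * A := by
        rw [hMsplit]; linarith
      refine le_of_mul_le_mul_right ?_ hMp23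
      nlinarith [hA']
    constructor
    · rw [hcM, hint]
      have hsumA : ∑ k ∈ Finset.range (2 ^ n), (1 / 2 ^ n : ℝ) * |V k| ^ ((2:ℝ)/3)
          = (1 / 2 ^ n) * A := by rw [← Finset.mul_sum, hA]
      rw [hsumA]
      rw [show (1:ℝ)/12 * M ^ ((1:ℝ)/3) = (2 ^ n * M ^ ((1:ℝ)/3)) / (12 * 2 ^ n) by
        field_simp]
      rw [show (1:ℝ)/2 ^ n * A = (12 * A) / (12 * 2 ^ n) by field_simp]
      gcongr
    · obtain ⟨k0, hk0mem, hk0max⟩ := Finset.exists_max_image (Finset.range (2 ^ n))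
        (fun k => V k ^ 2) ⟨0, Finset.mem_range.mpr (Nat.pow_pos (by norm_num))⟩
      have hk0 : k0 < 2 ^ n := Finset.mem_range.mp hk0mem
      have hmax : 2 ^ n * M ≤ 2 ^ n * V k0 ^ 2 := by
        calc 2 ^ n * M = ∑ k ∈ Finset.range (2 ^ n), V k ^ 2 := hV2.symm
          _ ≤ (Finset.range (2 ^ n)).card • (V k0 ^ 2) :=
              Finset.sum_le_card_nsmul _ _ _ fun x hx => hk0max x hx
          _ = 2 ^ n * V k0 ^ 2 := by
              rw [nsmul_eq_mul, Finset.card_range]; push_cast; ring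
      have hMle : M ≤ V k0 ^ 2 := le_of_mul_le_mul_left hmax h2n
      set t0 : ℝ := ((k0:ℝ) + 1/2) / 2 ^ n with ht0
      have ht01 : (k0:ℝ) / 2 ^ n < t0 := hdiv _ _ (by linarith)
      have ht02 : t0 < ((k0:ℝ) + 1) / 2 ^ n := hdiv _ _ (by linarith)
      have hval : (∑' l, c l * s l t0) = V k0 := by
        rw [hSt t0]; exact hkey k0 hk0 t0 ht01 ht02
      have hk0le : (k0:ℝ) + 1 ≤ 2 ^ n := by
        have := Nat.succ_le_of_lt hk0
        exact_mod_cast this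
      refine ⟨t0, ⟨?_, ?_⟩, ?_⟩
      · rw [ht0]; positivity
      · rw [ht0, div_le_one h2n]; linarith
      · rw [hcM, hval]
        have habs : (V k0 ^ 2) ^ ((1:ℝ)/3) = |V k0| ^ ((2:ℝ)/3) := by
          rw [← sq_abs (V k0), ← Real.rpow_natCast |V k0| 2, ← Real.rpow_mul (abs_nonneg _)]
          norm_num
        have hmono : M ^ ((1:ℝ)/3) ≤ (V k0 ^ 2) ^ ((1:ℝ)/3) :=
          Real.rpow_le_rpow hMnn hMle (by norm_num)
        have hnn : 0 ≤ M ^ ((1:ℝ)/3) := Real.rpow_nonneg hMnn _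
        calc (1:ℝ)/12 * M ^ ((1:ℝ)/3) ≤ M ^ ((1:ℝ)/3) := by linarith
          _ ≤ (V k0 ^ 2) ^ ((1:ℝ)/3) := hmono
          _ = |V k0| ^ ((2:ℝ)/3) := habs
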